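/- Let K be a field with char(K) ≠ 2, E/K an elliptic curve with Weierstrass coordinate functions x, y, and P ∈ E(K) a non-torsion point. If E'/K is an elliptic curve and φ: E' → E is an isogeny defined over K with φ(R) = P, then K(x(R), y(R)) = K(x(R)). -/

import Mathlib

open WeierstrassCurve WeierstrassCurve.Affine Polynomial

universe u

open Classical in
/-- A model of an isogeny defined over `K` between elliptic curves given by Weierstrass
models `E` and `E'` over `K`, of degree `d`: a compatible family of group homomorphisms on
points over every field extension of `K`, whose kernel over any algebraically closed
extension of `K` is finite of cardinality `d`. -/
structure KIsogeny (K : Type u) [Field K] (E E' : WeierstrassCurve K) (d : ℕ) where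
  hom : ∀ (L : Type u) [Field L] [Algebra K L], (E.baseChange L).toAffine.Point →+ (E'.baseChange L).toAffine.Point
  compat : ∀ (L : Type u) [Field L] [Algebra K L] (M : Type u) [Field M] [Algebra K M]
    (f : L →ₐ[K] M) (P : (E.baseChange L).toAffine.Point),
      hom M (Point.map (W' := E) f P) = Point.map (W' := E') f (hom L P)
  card_ker : ∀ (L : Type u) [Field L] [Algebra K L] [IsAlgClosed L],
      Nat.card (AddMonoidHom.ker (hom L)) = d

private lemma some_eq_some {R : Type*} [CommRing R] {W : WeierstrassCurve.Affine R}
    {x1 x2 y1 y2 : R} (hx : x1 = x2) (hy : y1 = y2) {h1 : W.Nonsingular x1 y1}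
    {h2 : W.Nonsingular x2 y2} : Point.some _ _ h1 = Point.some _ _ h2 := by
  subst hx; subst hy; rfl

set_option maxHeartbeats 1000000 in
set_option synthInstance.maxHeartbeats 200000 in
open Classical in
/-- Lemma 2.1: if `φ : E' → E` is a `K`-rational isogeny and `φ(R) = P` with `P ∈ E(K)`
non-torsion, then `K(x(R), y(R)) = K(x(R))`. -/
theorem stmt0 (K : Type u) [Field K] (hchar : ringChar K ≠ 2)
    (E E' : WeierstrassCurve K) [E.IsElliptic] [E'.IsElliptic]
    (P : (E.baseChange K).toAffine.Point) (hP : ∀ n : ℕ, n ≠ 0 → n • P ≠ 0)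
    (d : ℕ) (hd : 0 < d) (φ : KIsogeny K E' E d)
    (L : Type u) [Field L] [Algebra K L]
    (x y : L) (h : (E'.baseChange L).toAffine.Nonsingular x y)
    (hφ : φ.hom L (Point.some _ _ h) = Point.baseChange (W' := E) K L P) :
    IntermediateField.adjoin K {x, y} = IntermediateField.adjoin K {x} := by
  by_cases hy : y ∈ IntermediateField.adjoin K {x}
  · apply le_antisymm
    · rw [IntermediateField.adjoin_le_iff]
      intro z hz
      simp only [Set.mem_insert_iff, Set.mem_singleton_iff] at hz
      rcases hz with rfl | rfl
      · exact IntermediateField.subset_adjoin K ({z} : Set L) (Set.mem_singleton z)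
      · exact hy
    · exact IntermediateField.adjoin.mono K _ _
        (Set.singleton_subset_iff.mpr (Set.mem_insert x {y}))
  exfalso
  set F := IntermediateField.adjoin K {x} with hFdef
  have hxF : x ∈ F := IntermediateField.subset_adjoin K ({x} : Set L) (Set.mem_singleton x)
  set xF : F := ⟨x, hxF⟩ with hxFdef
  set b : F := algebraMap K F E'.a₁ * xF + algebraMap K F E'.a₃ with hbdef
  set c : F := -(xF ^ 3 + algebraMap K F E'.a₂ * xF ^ 2 + algebraMap K F E'.a₄ * xF
    + algebraMap K F E'.a₆) with hcdef
  set q : Polynomial F := X ^ 2 + C b * X + C c with hqdef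
  have hqm : q.Monic := by
    rw [hqdef, add_assoc]
    exact Polynomial.monic_X_pow_add
      (lt_of_le_of_lt Polynomial.degree_linear_le (by exact_mod_cast one_lt_two))
  have hq2 : q.natDegree = 2 := by
    have hlt : (C b * X + C c).degree < (X ^ 2 : Polynomial F).degree := by
      rw [Polynomial.degree_X_pow]
      exact lt_of_le_of_lt Polynomial.degree_linear_le (by exact_mod_cast one_lt_two)
    have hdeg : q.degree = 2 := by
      rw [hqdef, add_assoc, Polynomial.degree_add_eq_left_of_degree_lt hlt,
        Polynomial.degree_X_pow]
      norm_num
    exact Polynomial.natDegree_eq_of_degree_eq_some hdeg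
  -- the Weierstrass equation over L
  have hEq : y ^ 2 + algebraMap K L E'.a₁ * x * y + algebraMap K L E'.a₃ * y
      = x ^ 3 + algebraMap K L E'.a₂ * x ^ 2 + algebraMap K L E'.a₄ * x
        + algebraMap K L E'.a₆ := by
    have := ((E'.baseChange L).toAffine.equation_iff x y).mp h.1
    simpa [WeierstrassCurve.baseChange] using this
  have hbL : (b : L) = algebraMap K L E'.a₁ * x + algebraMap K L E'.a₃ := by
    simp [hbdef, hxFdef]
  have hcL : (c : L) = -(x ^ 3 + algebraMap K L E'.a₂ * x ^ 2 + algebraMap K L E'.a₄ * x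
      + algebraMap K L E'.a₆) := by
    simp [hcdef, hxFdef]
  have hrootL : y ^ 2 + (b : L) * y + (c : L) = 0 := by
    rw [hbL, hcL]
    linear_combination hEq
  have hroot : Polynomial.aeval y q = 0 := by
    rw [hqdef]
    simp only [map_add, map_mul, map_pow, aeval_X, aeval_C]
    simpa using hrootL
  have hint : IsIntegral F y := ⟨q, hqm, hroot⟩
  have hyr : y ∉ (algebraMap F L).range := by
    rintro ⟨z, hz⟩
    exact hy (hz ▸ z.2)
  have hmin : minpoly F y = q := by
    obtain ⟨r, hr⟩ := minpoly.dvd F y hroot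
    have hm := minpoly.monic hint
    have h2 : 2 ≤ (minpoly F y).natDegree := (minpoly.two_le_natDegree_iff hint).mpr hyr
    have hr0 : r ≠ 0 := by
      rintro rfl
      rw [mul_zero] at hr
      exact hqm.ne_zero hr
    have hdeg : (minpoly F y).natDegree + r.natDegree = 2 := by
      rw [← Polynomial.natDegree_mul (minpoly.ne_zero hint) hr0, ← hr, hq2]
    have hrm : r.Monic := hm.of_mul_monic_left (hr ▸ hqm)
    have hr1 : r = 1 := hrm.natDegree_eq_zero.mp (by omega)
    rw [hr, hr1, mul_one]
  -- the field F(y)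
  set Fy := IntermediateField.adjoin F {y} with hFydef
  have hyFy : y ∈ Fy := IntermediateField.subset_adjoin F ({y} : Set L) (Set.mem_singleton y)
  set yE : Fy := ⟨y, hyFy⟩ with hyEdef
  have hxFy : x ∈ Fy := Fy.algebraMap_mem xF
  set xE : Fy := ⟨x, hxFy⟩ with hxEdef
  have hKmem : ∀ r : K, algebraMap K L r ∈ Fy := fun r => by
    rw [IsScalarTower.algebraMap_apply K F L r]
    exact Fy.algebraMap_mem _
  have hnegY : (E'.baseChange L).toAffine.negY x y
      = -y - algebraMap K L E'.a₁ * x - algebraMap K L E'.a₃ := rfl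
  have hnegmem : (E'.baseChange L).toAffine.negY x y ∈ Fy := by
    rw [hnegY]
    exact Fy.sub_mem (Fy.sub_mem (Fy.neg_mem hyFy) (Fy.mul_mem (hKmem _) hxFy)) (hKmem _)
  set yE' : Fy := ⟨_, hnegmem⟩ with hyE'def
  -- the inclusion of F(y) into L, as a K-algebra hom
  let ι : Fy →ₐ[K] L := Fy.val.restrictScalars K
  -- yE' is a root of the minimal polynomial of y over F
  have hroot' : Polynomial.aeval yE' (minpoly F y) = 0 := by
    apply (algebraMap Fy L).injective
    rw [map_zero, ← Polynomial.aeval_algebraMap_apply]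
    show Polynomial.aeval ((E'.baseChange L).toAffine.negY x y) (minpoly F y) = 0
    rw [hmin, hqdef]
    simp only [map_add, map_mul, map_pow, aeval_X, aeval_C]
    have hval : (E'.baseChange L).toAffine.negY x y = -y - (b : L) := by
      rw [hnegY, hbL]; ring
    rw [hval]
    have hb' : algebraMap F L b = (b : L) := rfl
    have hc' : algebraMap F L c = (c : L) := rfl
    rw [hb', hc']
    linear_combination hrootL
  -- the automorphism of F(y) over F sending y to yE'
  let B := IntermediateField.adjoin.powerBasis hint
  have hrootgen : Polynomial.aeval yE' (minpoly F B.gen) = 0 := by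
    rw [IntermediateField.adjoin.powerBasis_gen, IntermediateField.minpoly_gen]
    exact hroot'
  let σ₀ : Fy →ₐ[F] Fy := B.lift yE' hrootgen
  have hσy : σ₀ yE = yE' := B.lift_gen yE' hrootgen
  have hσx : σ₀ xE = xE := by
    have hxalg : xE = algebraMap F Fy xF := by
      apply Subtype.ext
      rfl
    rw [hxalg]
    exact σ₀.commutes xF
  let σ : Fy →ₐ[K] Fy := σ₀.restrictScalars K
  -- the point R' over F(y) mapping to R
  have h' : (E'.baseChange Fy).toAffine.Nonsingular xE yE :=
    (WeierstrassCurve.Affine.baseChange_nonsingular (W := E'.toAffine) (f := ι)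
      ι.injective xE yE).mp h
  letI : DecidableEq Fy := fun a b => Classical.propDecidable (a = b)
  have hmapR : Point.map (W' := E') ι (Point.some _ _ h') = Point.some _ _ h := by
    rw [Point.map_some]
    rfl
  -- φ(R') is the base change of P to F(y)
  have hQ : φ.hom Fy (Point.some _ _ h') = Point.baseChange (W' := E) K Fy P := by
    apply Point.map_injective (W' := E) ι
    have hc := φ.compat Fy L ι (Point.some _ _ h')
    rw [hmapR, hφ] at hc
    rw [← hc, Point.map_baseChange]
  -- σ(R') = -R'
  have hcoordy : σ₀ yE = (E'.baseChange Fy).toAffine.negY xE yE := by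
    rw [hσy]
    apply Subtype.ext
    have h2 := WeierstrassCurve.Affine.baseChange_negY (W' := E'.toAffine) (f := ι) xE yE
    exact h2
  have hneg : Point.map (W' := E') σ (Point.some _ _ h') = -Point.some _ _ h' := by
    rw [Point.map_some, Point.neg_some]
    exact some_eq_some hσx hcoordy
  -- conclude 2 • P = 0
  have h3 := φ.compat Fy Fy σ (Point.some _ _ h')
  rw [hneg, map_neg, hQ, Point.map_baseChange] at h3
  have h4 : (2 : ℕ) • Point.baseChange (W' := E) K Fy P = 0 := by
    rw [two_nsmul]
    nth_rewrite 1 [← h3]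
    exact neg_add_cancel _
  have h5 : (2 : ℕ) • P = 0 := by
    apply Point.map_injective (W' := E) (Algebra.ofId K Fy)
    rw [map_nsmul, map_zero]
    exact h4
  exact hP 2 two_ne_zero h5
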